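/- The set of complex numbers z such that some nonzero element f of some graded piece B_n has a pole at z (i.e. the multiplicity of z as a root of the denominator of f in lowest terms exceeds its multiplicity as a root of the numerator) is infinite; equivalently, the set of valuations of K^gr(B) = ℂ(x) taking a negative value on some element of B (relative to the degree-1 element b₁ = 1/P₁) is infinite. -/

import Mathlib

open Polynomial

/-- `J n = ∑_{i=0}^∞ ⌊n/2^i⌋`, which equals the finite sum over `i = 0, …, n`
since `⌊n/2^i⌋ = 0` whenever `2^i > n`. -/
def J (n : ℕ) : ℕ := ∑ i ∈ Finset.range (n + 1), n / 2 ^ i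

/-- `P z n = ∏_{i=0}^∞ (x − z_i)^{⌊n/2^i⌋}` in `ℂ[x]`, which equals the finite
product over `i = 0, …, n` since the exponent vanishes whenever `2^i > n`. -/
noncomputable def P (z : ℕ → ℂ) (n : ℕ) : Polynomial ℂ :=
  ∏ i ∈ Finset.range (n + 1), (X - C (z i)) ^ (n / 2 ^ i)

/-- `B_n = { Q(x)/P_n(x) : Q ∈ ℂ[x], deg Q ≤ J(n) }`, as a subset of the field
of rational functions `ℂ(x)`. -/
noncomputable def B (z : ℕ → ℂ) (n : ℕ) : Set (RatFunc ℂ) :=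
  {f | ∃ Q : Polynomial ℂ, Q.natDegree ≤ J n ∧
    f = algebraMap (Polynomial ℂ) (RatFunc ℂ) Q /
        algebraMap (Polynomial ℂ) (RatFunc ℂ) (P z n)}

/-- The set of complex numbers `w` such that some nonzero element `f` of some
graded piece `B_n` has a pole at `w` (the multiplicity of `w` as a root of the
denominator of `f` in lowest terms exceeds its multiplicity as a root of the
numerator) is infinite; equivalently, the set of valuations of
`K^gr(B) = ℂ(x)` taking a negative value on some element of `B` (relative to
the degree-1 element `b₁ = 1/P₁`) is infinite. -/
theorem poles_infinite (z : ℕ → ℂ) (hz : Function.Injective z) :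
    {w : ℂ | ∃ (n : ℕ) (f : RatFunc ℂ), f ∈ B z n ∧ f ≠ 0 ∧
      f.num.rootMultiplicity w < f.denom.rootMultiplicity w}.Infinite := by
  apply Set.Infinite.mono (s := Set.range z)
  · rintro w ⟨i, rfl⟩
    set n := 2 ^ i with hn
    have hPmonic : (P z n).Monic :=
      monic_prod_of_monic _ _ fun j _ => (monic_X_sub_C (z j)).pow _
    have hP0 : P z n ≠ 0 := hPmonic.ne_zero
    have hPalg : algebraMap (Polynomial ℂ) (RatFunc ℂ) (P z n) ≠ 0 :=
      RatFunc.algebraMap_ne_zero hP0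
    refine ⟨n, (algebraMap (Polynomial ℂ) (RatFunc ℂ) (P z n))⁻¹, ⟨1, by simp, by
      simp [one_div]⟩, inv_ne_zero hPalg, ?_⟩
    set f := (algebraMap (Polynomial ℂ) (RatFunc ℂ) (P z n))⁻¹ with hf
    have hf0 : f ≠ 0 := inv_ne_zero hPalg
    have hnum0 : f.num ≠ 0 := RatFunc.num_ne_zero hf0
    have hden0 : f.denom ≠ 0 := f.denom_ne_zero
    have key : f.denom = f.num * P z n := by
      apply RatFunc.algebraMap_injective ℂ
      have h1 : algebraMap (Polynomial ℂ) (RatFunc ℂ) f.num /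
          algebraMap (Polynomial ℂ) (RatFunc ℂ) f.denom = f := f.num_div_denom
      have h2 : algebraMap (Polynomial ℂ) (RatFunc ℂ) f.num =
          f * algebraMap (Polynomial ℂ) (RatFunc ℂ) f.denom :=
        (div_eq_iff (RatFunc.algebraMap_ne_zero hden0)).mp h1
      rw [map_mul, h2, hf]
      field_simp
    have hroot : (P z n).IsRoot (z i) := by
      rw [P, IsRoot, eval_prod]
      apply Finset.prod_eq_zero (i := i)
      · exact Finset.mem_range.mpr (Nat.lt_succ_of_lt (Nat.lt_two_pow_self (n := i)))
      · simp [hn, Nat.div_self (Nat.two_pow_pos i)]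
    have hPmult : 0 < (P z n).rootMultiplicity (z i) :=
      (rootMultiplicity_pos hP0).mpr hroot
    rw [key, rootMultiplicity_mul (mul_ne_zero hnum0 hP0)]
    omega
  · exact Set.infinite_range_of_injective hz
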